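/- Let ν be a σ-finite Radon measure on a Borel set Θ ⊆ ℝ^d, H = L²(ν), and let f_0 ∈ H with f_0 ≥ 0. Then for every f ∈ H: ν-ess sup_θ |f(θ)|/f_0(θ) = sup over g ∈ H of |(f,g)_H| / (f_0,|g|)_H, with the conventions 0/0 = 0 and s/0 = ∞ for s > 0 on both sides. -/

import Mathlib

/- Lemma 1 of Roueff–Rydén: for `f₀ ∈ H₊` (H = L²(ν), ν a σ-finite Radon measure on a
Borel subset Θ of ℝ^d) and any `f ∈ H`,
`ν-ess sup |f|/f₀ = sup_{g ∈ H} |(f,g)_H| / (f₀,|g|)_H`,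
with the conventions `0/0 = 0` and `s/0 = ∞` (realized by `ℝ≥0∞`-division). -/

open MeasureTheory ENNReal

theorem statement4
    {d : ℕ} {Θ : Set (Fin d → ℝ)} (hΘ : MeasurableSet Θ)
    (ν : Measure Θ) [SigmaFinite ν]
    [IsLocallyFiniteMeasure ν] [ν.InnerRegular]
    (f₀ : Lp ℝ 2 ν) (hf₀_nonneg : 0 ≤ᵐ[ν] ⇑f₀)
    (f : Lp ℝ 2 ν) :
    essSup (fun θ => ENNReal.ofReal |f θ| / ENNReal.ofReal (f₀ θ)) ν
      = ⨆ g : Lp ℝ 2 ν,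
          ENNReal.ofReal |∫ θ, f θ * g θ ∂ν| /
            ENNReal.ofReal (∫ θ, f₀ θ * |g θ| ∂ν) := by
  classical
  set φ : Θ → ℝ≥0∞ := fun θ => ENNReal.ofReal |f θ| / ENNReal.ofReal (f₀ θ) with hφdef
  set R := ⨆ g : Lp ℝ 2 ν,
      ENNReal.ofReal |∫ θ, f θ * g θ ∂ν| /
        ENNReal.ofReal (∫ θ, f₀ θ * |g θ| ∂ν) with hRdef
  set M := essSup φ ν with hMdef
  have hInt : ∀ g : Lp ℝ 2 ν, Integrable (fun θ => f θ * g θ) ν := fun g => by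
    have := L2.integrable_inner (𝕜 := ℝ) f g
    simpa [RCLike.inner_apply, conj_trivial, mul_comm] using this
  have hInt0 : ∀ g : Lp ℝ 2 ν, Integrable (fun θ => f₀ θ * g θ) ν := fun g => by
    have := L2.integrable_inner (𝕜 := ℝ) f₀ g
    simpa [RCLike.inner_apply, conj_trivial, mul_comm] using this
  -- measurable representatives
  have hf := Lp.aestronglyMeasurable f
  have hf0 := Lp.aestronglyMeasurable f₀
  set F : Θ → ℝ := hf.mk f with hFdef
  set F₀ : Θ → ℝ := hf0.mk f₀ with hF₀def
  have hFae : ⇑f =ᵐ[ν] F := hf.ae_eq_mk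
  have hF₀ae : ⇑f₀ =ᵐ[ν] F₀ := hf0.ae_eq_mk
  have hFm : Measurable F := hf.stronglyMeasurable_mk.measurable
  have hF₀m : Measurable F₀ := hf0.stronglyMeasurable_mk.measurable
  have hle : R ≤ M := by
    refine iSup_le fun g => ?_
    rcases eq_top_or_lt_top M with hM | hM
    · rw [hM]; exact le_top
    have hMne : M ≠ ⊤ := hM.ne
    have hae : ∀ᵐ θ ∂ν, φ θ ≤ M := ae_le_essSup
    have hbound : ∀ᵐ θ ∂ν, |f θ| ≤ M.toReal * f₀ θ := by
      filter_upwards [hae, hf₀_nonneg] with θ h1 h2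
      have h2' : (0 : ℝ) ≤ f₀ θ := h2
      rcases eq_or_lt_of_le h2' with h0 | h0
      · by_contra hcon
        push_neg at hcon
        have hfpos : 0 < |f θ| := lt_of_le_of_lt (by rw [← h0, mul_zero]) hcon
        have : φ θ = ⊤ := by
          rw [hφdef]
          simp only
          rw [← h0, ENNReal.ofReal_zero, ENNReal.div_zero]
          simpa [ENNReal.ofReal_eq_zero, not_le] using hfpos
        rw [this] at h1
        exact hMne (top_le_iff.mp h1)
      · have hne0 : ENNReal.ofReal (f₀ θ) ≠ 0 := by
          simpa [ENNReal.ofReal_eq_zero, not_le] using h0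
        have h1' : ENNReal.ofReal |f θ| ≤ M * ENNReal.ofReal (f₀ θ) :=
          (ENNReal.div_le_iff_le_mul (Or.inl hne0) (Or.inl ENNReal.ofReal_ne_top)).mp h1
        have : ENNReal.ofReal |f θ| ≤ ENNReal.ofReal (M.toReal * f₀ θ) := by
          rw [ENNReal.ofReal_mul ENNReal.toReal_nonneg, ENNReal.ofReal_toReal hMne]
          exact h1'
        exact (ENNReal.ofReal_le_ofReal_iff (mul_nonneg ENNReal.toReal_nonneg h2')).mp
          ((ENNReal.ofReal_le_ofReal (le_refl _)).trans this)
    have hIfg := hInt g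
    have hIf0g : Integrable (fun θ => f₀ θ * |g θ|) ν := by
      refine (hInt0 g).abs.mono' ?_ ?_
      · exact hf0.mul (Lp.aestronglyMeasurable g).norm
      · filter_upwards with θ
        simp [abs_mul, abs_abs, Real.norm_eq_abs]
    have hD0 : 0 ≤ ∫ θ, f₀ θ * |g θ| ∂ν :=
      integral_nonneg_of_ae (by
        filter_upwards [hf₀_nonneg] with θ h
        exact mul_nonneg h (abs_nonneg _))
    have hND : |∫ θ, f θ * g θ ∂ν| ≤ M.toReal * ∫ θ, f₀ θ * |g θ| ∂ν := by
      calc |∫ θ, f θ * g θ ∂ν| ≤ ∫ θ, |f θ * g θ| ∂ν := by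
            simpa only [Real.norm_eq_abs] using norm_integral_le_integral_norm (fun θ => f θ * g θ) (μ := ν)
        _ ≤ ∫ θ, M.toReal * (f₀ θ * |g θ|) ∂ν := by
            refine integral_mono_ae hIfg.abs (hIf0g.const_mul _) ?_
            filter_upwards [hbound] with θ h
            rw [abs_mul, ← mul_assoc]
            exact mul_le_mul_of_nonneg_right h (abs_nonneg _)
        _ = M.toReal * ∫ θ, f₀ θ * |g θ| ∂ν := integral_const_mul _ _
    rcases eq_or_lt_of_le hD0 with hD | hD
    · have hN0 : |∫ θ, f θ * g θ ∂ν| = 0 := by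
        refine le_antisymm ?_ (abs_nonneg _)
        rw [← hD, mul_zero] at hND
        exact hND
      rw [hN0, ENNReal.ofReal_zero, ENNReal.zero_div]
      exact zero_le
    · have hne0 : ENNReal.ofReal (∫ θ, f₀ θ * |g θ| ∂ν) ≠ 0 := by
        simpa [ENNReal.ofReal_eq_zero, not_le] using hD
      rw [ENNReal.div_le_iff_le_mul (Or.inl hne0) (Or.inl ENNReal.ofReal_ne_top)]
      calc ENNReal.ofReal |∫ θ, f θ * g θ ∂ν|
          ≤ ENNReal.ofReal (M.toReal * ∫ θ, f₀ θ * |g θ| ∂ν) := ENNReal.ofReal_le_ofReal hND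
        _ = ENNReal.ofReal M.toReal * ENNReal.ofReal (∫ θ, f₀ θ * |g θ| ∂ν) :=
            ENNReal.ofReal_mul ENNReal.toReal_nonneg
        _ = M * ENNReal.ofReal (∫ θ, f₀ θ * |g θ| ∂ν) := by
            rw [ENNReal.ofReal_toReal hMne]
  have hge : M ≤ R := by
    by_contra hcon
    push_neg at hcon
    obtain ⟨c, hc1, hc2⟩ := exists_between hcon
    have hc_ne_top : c ≠ ⊤ := hc2.ne_top
    have hc_pos : 0 < c := lt_of_le_of_lt zero_le hc1
    set c' := c.toReal with hc'def
    have hc'_pos : 0 < c' := ENNReal.toReal_pos hc_pos.ne' hc_ne_top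
    have hcc' : ENNReal.ofReal c' = c := ENNReal.ofReal_toReal hc_ne_top
    -- the superlevel set has positive measure
    have hpos : 0 < ν {θ | c < φ θ} := by
      by_contra h0
      push_neg at h0
      have h0' : ν {θ | c < φ θ} = 0 := le_antisymm h0 zero_le
      have haeφ : ∀ᵐ θ ∂ν, φ θ ≤ c := by
        rw [ae_iff]
        simpa [not_le] using h0'
      exact absurd (essSup_le_of_ae_le c haeφ) (not_le.mpr hc2)
    set Sp := {θ | c' * F₀ θ < F θ} with hSpdef
    set Sn := {θ | c' * F₀ θ < -F θ} with hSndef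
    have hsub : ∀ᵐ θ ∂ν, θ ∈ {θ | c < φ θ} → θ ∈ Sp ∪ Sn := by
      filter_upwards [hFae, hF₀ae, hf₀_nonneg] with θ h1 h2 h3 hmem
      have h3' : (0 : ℝ) ≤ f₀ θ := h3
      have hmem' : c < ENNReal.ofReal |f θ| / ENNReal.ofReal (f₀ θ) := hmem
      have habs : c' * f₀ θ < |f θ| := by
        rcases eq_or_lt_of_le h3' with h0 | h0
        · have hfne : ENNReal.ofReal |f θ| ≠ 0 := by
            intro hz
            rw [← h0, ENNReal.ofReal_zero, hz, ENNReal.zero_div] at hmem'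
            exact absurd hmem' (not_lt.mpr zero_le)
          have : 0 < |f θ| := by
            by_contra hle'
            push_neg at hle'
            exact hfne (by simp [ENNReal.ofReal_eq_zero, hle'])
          rw [← h0, mul_zero]
          exact this
        · have hne0 : ENNReal.ofReal (f₀ θ) ≠ 0 := by
            simpa [ENNReal.ofReal_eq_zero, not_le] using h0
          have := (ENNReal.lt_div_iff_mul_lt (Or.inl hne0)
            (Or.inl ENNReal.ofReal_ne_top)).mp hmem'
          rw [← hcc', ← ENNReal.ofReal_mul hc'_pos.le] at this
          exact (ENNReal.ofReal_lt_ofReal_iff_of_nonneg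
            (mul_nonneg hc'_pos.le h3')).mp this
      rw [h1, h2] at habs
      rcases lt_abs.mp habs with h | h
      · exact Or.inl h
      · exact Or.inr h
    have hposU : 0 < ν (Sp ∪ Sn) :=
      lt_of_lt_of_le hpos (measure_mono_ae hsub)
    -- key claim
    have key : ∀ ε : ℝ, |ε| = 1 → 0 < ν {θ | c' * F₀ θ < ε * F θ} → c ≤ R := by
      intro ε hε hSpos
      have hSmeas : MeasurableSet {θ | c' * F₀ θ < ε * F θ} :=
        measurableSet_lt (hF₀m.const_mul c') (hFm.const_mul ε)
      obtain ⟨B, hBmeas, hBsub, hBpos, hBfin⟩ :=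
        Measure.exists_subset_measure_lt_top hSmeas hSpos
      set g : Lp ℝ 2 ν := indicatorConstLp 2 hBmeas hBfin.ne ε with hgdef
      have hg : ⇑g =ᵐ[ν] B.indicator fun _ => ε := indicatorConstLp_coeFn
      haveI : IsFiniteMeasure (ν.restrict B) :=
        ⟨by rwa [Measure.restrict_apply_univ]⟩
      have hfi : Integrable (⇑f) (ν.restrict B) :=
        ((Lp.memLp f).restrict B).integrable one_le_two
      have hf0i : Integrable (⇑f₀) (ν.restrict B) :=
        ((Lp.memLp f₀).restrict B).integrable one_le_two
      have hNeq : ∫ θ, f θ * g θ ∂ν = ∫ θ in B, ε * f θ ∂ν := by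
        rw [← integral_indicator hBmeas]
        refine integral_congr_ae ?_
        filter_upwards [hg] with θ hθ
        rw [hθ]
        by_cases hB : θ ∈ B
        · simp [Set.indicator_of_mem hB, mul_comm]
        · simp [Set.indicator_of_notMem hB]
      have hDeq : ∫ θ, f₀ θ * |g θ| ∂ν = ∫ θ in B, f₀ θ ∂ν := by
        rw [← integral_indicator hBmeas]
        refine integral_congr_ae ?_
        filter_upwards [hg] with θ hθ
        rw [hθ]
        by_cases hB : θ ∈ B
        · simp [Set.indicator_of_mem hB, hε]
        · simp [Set.indicator_of_notMem hB]
      have hae_restr : ∀ᵐ θ ∂(ν.restrict B), c' * f₀ θ < ε * f θ ∧ 0 ≤ f₀ θ := by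
        filter_upwards [ae_restrict_mem hBmeas, ae_restrict_of_ae hFae,
          ae_restrict_of_ae hF₀ae, ae_restrict_of_ae hf₀_nonneg] with θ h1 h2 h3 h4
        have hS := hBsub h1
        refine ⟨?_, h4⟩
        rw [h2, h3]
        exact hS
      have hNpos : 0 < ∫ θ in B, ε * f θ ∂ν := by
        rw [integral_pos_iff_support_of_nonneg_ae
          (by filter_upwards [hae_restr] with θ h
              exact le_of_lt (lt_of_le_of_lt (mul_nonneg hc'_pos.le h.2) h.1))
          (hfi.const_mul ε)]
        have hmemsup : ∀ᵐ θ ∂(ν.restrict B), θ ∈ Function.support fun θ => ε * f θ := by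
          filter_upwards [hae_restr] with θ h
          have : 0 < ε * f θ := lt_of_le_of_lt (mul_nonneg hc'_pos.le h.2) h.1
          exact this.ne'
        calc (0 : ℝ≥0∞) < ν B := hBpos
          _ = (ν.restrict B) Set.univ := (Measure.restrict_apply_univ _).symm
          _ ≤ (ν.restrict B) (Function.support fun θ => ε * f θ) :=
              measure_mono_ae (hmemsup.mono fun θ h _ => h)
      have hND : c' * ∫ θ in B, f₀ θ ∂ν ≤ ∫ θ in B, ε * f θ ∂ν := by
        rw [← integral_const_mul]
        refine integral_mono_ae (hf0i.const_mul c') (hfi.const_mul ε) ?_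
        filter_upwards [hae_restr] with θ h
        exact h.1.le
      have hDpos0 : 0 ≤ ∫ θ in B, f₀ θ ∂ν :=
        integral_nonneg_of_ae (hae_restr.mono fun θ h => h.2)
      have hfinal : c ≤ ENNReal.ofReal |∫ θ, f θ * g θ ∂ν| /
          ENNReal.ofReal (∫ θ, f₀ θ * |g θ| ∂ν) := by
        rw [hNeq, hDeq, ← hcc']
        rcases eq_or_lt_of_le hDpos0 with hD | hD
        · have hnum : ENNReal.ofReal |∫ θ in B, ε * f θ ∂ν| ≠ 0 := by
            simp only [ne_eq, ENNReal.ofReal_eq_zero, not_le]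
            exact abs_pos.mpr hNpos.ne'
          rw [← hD, ENNReal.ofReal_zero, ENNReal.div_zero hnum]
          exact le_top
        · have hne0 : ENNReal.ofReal (∫ θ in B, f₀ θ ∂ν) ≠ 0 := by
            simpa [ENNReal.ofReal_eq_zero, not_le] using hD
          rw [ENNReal.le_div_iff_mul_le (Or.inl hne0) (Or.inl ENNReal.ofReal_ne_top)]
          calc ENNReal.ofReal c' * ENNReal.ofReal (∫ θ in B, f₀ θ ∂ν)
              = ENNReal.ofReal (c' * ∫ θ in B, f₀ θ ∂ν) :=
                (ENNReal.ofReal_mul hc'_pos.le).symm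
            _ ≤ ENNReal.ofReal |∫ θ in B, ε * f θ ∂ν| :=
                ENNReal.ofReal_le_ofReal (hND.trans (le_abs_self _))
      exact hfinal.trans (le_iSup (fun g : Lp ℝ 2 ν =>
        ENNReal.ofReal |∫ θ, f θ * g θ ∂ν| /
          ENNReal.ofReal (∫ θ, f₀ θ * |g θ| ∂ν)) g)
    have : 0 < ν Sp ∨ 0 < ν Sn := by
      by_contra hboth
      push_neg at hboth
      have h1 : ν Sp = 0 := le_antisymm hboth.1 zero_le
      have h2 : ν Sn = 0 := le_antisymm hboth.2 zero_le
      have : ν (Sp ∪ Sn) = 0 := measure_union_null h1 h2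
      rw [this] at hposU
      exact lt_irrefl _ hposU
    rcases this with h | h
    · have := key 1 (by norm_num) (by simpa [hSpdef, one_mul] using h)
      exact absurd this (not_le.mpr hc1)
    · have := key (-1) (by norm_num) (by simpa [hSndef, neg_one_mul] using h)
      exact absurd this (not_le.mpr hc1)
  exact le_antisymm hge hle
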